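/- Let α ≥ 1 and β be integers with 0 ≤ β < α, and let r be an integer with r + α > 0. Define T^{(α,β,r)}_{m,s} := 0 for m ≤ 0 and T^{(α,β,r)}_{n+1,s} := ∑_{k ≥ 0} C_s(n - r k, β + α k) for n ≥ 0. Then in the ring of formal power series ℤ[[x]] one has ((1-x)^{α} - x^{r+α}(1 + x + ⋯ + x^{s-1})^{α}) · ∑_{n ≥ 0} T^{(α,β,r)}_{n+1,s} x^{n} = (1-x)^{α-β-1} (x + x^{2} + ⋯ + x^{s})^{β}. -/

import Mathlib

/-- The quasi-bi^s-nomial coefficients `C_s(n,k)`. -/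
def quasi (s : ℕ) : ℕ → ℤ → ℤ
  | 0, k => if k = 0 then 1 else 0
  | n+1, k =>
    if k < 0 ∨ (n+1 : ℤ) < k then 0
    else quasi s n k + ∑ j ∈ Finset.range s, if j ≤ n then quasi s (n - j) (k - 1) else 0
  termination_by n _ => n
  decreasing_by all_goals omega

/-- `C_s(n,k)` extended by zero to negative `n`. -/
def quasiZ (s : ℕ) (n k : ℤ) : ℤ :=
  if n < 0 then 0 else quasi s n.toNat k

/-- The transversal sums `T^{(α,β,r)}_{m,s}`: zero for `m ≤ 0`, and
`T^{(α,β,r)}_{n+1,s} = ∑_{k ≥ 0} C_s(n - r k, β + α k)` for `n ≥ 0`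
(a finite sum since `α + r > 0`). -/
noncomputable def Ttr (s α β : ℕ) (r : ℤ) (m : ℤ) : ℤ :=
  if m ≤ 0 then 0 else ∑ᶠ k : ℕ, quasiZ s ((m - 1) - r * k) ((β : ℤ) + (α : ℤ) * k)

open PowerSeries Finset

lemma quasi_eq_zero (s n : ℕ) (k : ℤ) (h : k < 0 ∨ (n : ℤ) < k) : quasi s n k = 0 := by
  cases n with
  | zero => rw [quasi, if_neg (by omega)]
  | succ n => rw [quasi, if_pos (by push_cast at h ⊢; omega)]

lemma quasi_succ (s n : ℕ) (k : ℤ) :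
    quasi s (n+1) k = quasi s n k + ∑ j ∈ Finset.range s, if j ≤ n then quasi s (n-j) (k-1) else 0 := by
  rw [quasi]
  split_ifs with h
  · rw [quasi_eq_zero s n k (by omega), Finset.sum_eq_zero, add_zero]
    intro j hj
    split_ifs with hj'
    · exact quasi_eq_zero s (n-j) (k-1) (by omega)
    · rfl
  · rfl

noncomputable def Fq (s : ℕ) (k : ℤ) : PowerSeries ℤ := PowerSeries.mk fun n => quasi s n k

lemma Fq_neg (s : ℕ) (k : ℤ) (hk : k < 0) : Fq s k = 0 := by
  ext n; simp [Fq, quasi_eq_zero s n k (Or.inl hk)]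

lemma P_eq (s : ℕ) :
    (∑ i ∈ Icc 1 s, (X : PowerSeries ℤ)^i) = X * ∑ i ∈ range s, (X : PowerSeries ℤ)^i := by
  rw [Finset.mul_sum, show Icc 1 s = Ico 1 (s+1) by rfl, Finset.sum_Ico_eq_sum_range]
  simp [pow_add, pow_succ, mul_comm, pow_one]

lemma Fq_rec (s : ℕ) (k : ℤ) :
    (1 - X) * Fq s k =
      (∑ i ∈ Icc 1 s, (X : PowerSeries ℤ)^i) * Fq s (k-1) + if k = 0 then 1 else 0 := by
  ext n
  rw [sub_mul, one_mul, map_sub, map_add, Finset.sum_mul, map_sum]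
  simp only [PowerSeries.coeff_X_pow_mul', Fq, coeff_mk]
  cases n with
  | zero =>
    rw [PowerSeries.coeff_zero_X_mul, quasi,
      Finset.sum_eq_zero (fun i hi => by rw [if_neg]; simp at hi; omega)]
    split_ifs <;> simp
  | succ n =>
    rw [PowerSeries.coeff_succ_X_mul, coeff_mk, quasi_succ]
    have h1 : (PowerSeries.coeff (R := ℤ) (n+1)) (if k = 0 then (1 : PowerSeries ℤ) else 0) = 0 := by
      split_ifs <;> simp [PowerSeries.coeff_one]
    rw [h1, add_zero, show Icc 1 s = Ico 1 (s+1) by rfl, Finset.sum_Ico_eq_sum_range]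
    have h2 : s + 1 - 1 = s := by omega
    rw [h2]
    ring_nf
    congr 1
    funext j
    rw [show 1 + n - (1 + j) = n - j from by omega]
    by_cases h : j ≤ n
    · rw [if_pos h, if_pos (by omega)]
    · rw [if_neg h, if_neg (by omega)]

lemma Fq_pow (s b : ℕ) :
    (1 - X : PowerSeries ℤ)^(b+1) * Fq s b = (∑ i ∈ Icc 1 s, (X : PowerSeries ℤ)^i)^b := by
  induction b with
  | zero =>
    rw [pow_one, pow_zero, Fq_rec, show ((0:ℕ):ℤ) - 1 = -1 from by norm_num,
      Fq_neg s (-1) (by norm_num), mul_zero, zero_add, if_pos (by norm_num)]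
  | succ b ih =>
    rw [Nat.cast_add, Nat.cast_one]
    have h1 : (1 - X : PowerSeries ℤ)^(b+1+1) * Fq s ((b:ℤ)+1)
        = (1-X)^(b+1) * ((1-X) * Fq s ((b:ℤ)+1)) := by ring
    rw [h1, Fq_rec, show ((b:ℤ)+1) - 1 = (b:ℤ) from by ring, if_neg (by omega),
      add_zero, ← mul_assoc, mul_comm ((1-X:PowerSeries ℤ)^(b+1)), mul_assoc, ih, ← pow_succ']

section G
variable (s α β : ℕ) (r : ℤ)

noncomputable def Gq (k : ℕ) : PowerSeries ℤ :=
  PowerSeries.mk fun n => quasiZ s ((n:ℤ) - r * k) ((β:ℤ) + (α:ℤ) * k)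

lemma Gq_shift (hr : 0 < r + α) (k : ℕ) :
    (X : PowerSeries ℤ)^((-(r*k)).toNat) * Gq s α β r k
      = X^((r*k).toNat) * Fq s ((β:ℤ) + (α:ℤ)*k) := by
  have hαr : 0 ≤ (r + α) * k := mul_nonneg hr.le (by positivity)
  have hkey : -(r*(k:ℤ)) ≤ (α:ℤ)*k := by nlinarith [hαr]
  ext n
  rw [PowerSeries.coeff_X_pow_mul', PowerSeries.coeff_X_pow_mul']
  simp only [Gq, Fq, coeff_mk, quasiZ]
  set a := ((r*(k:ℤ)).toNat) with ha
  set b := ((-(r*(k:ℤ))).toNat) with hb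
  by_cases h1 : b ≤ n
  · rw [if_pos h1]
    have hc : ((n - b : ℕ) : ℤ) - r*k = (n:ℤ) - a := by omega
    rw [hc]
    by_cases h2 : a ≤ n
    · rw [if_pos h2, if_neg (by omega), show ((n:ℤ) - a).toNat = n - a from by omega]
    · rw [if_neg h2, if_pos (by omega)]
  · rw [if_neg h1, if_pos (show a ≤ n by omega)]
    rw [show n - a = n from by omega]
    exact (quasi_eq_zero s n _ (Or.inr (by omega))).symm

lemma Gq_eq (hr : 0 < r + α) (k : ℕ) :
    (1 - X : PowerSeries ℤ)^(β + α*k + 1) * Gq s α β r k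
      = X^(β + (r+α).toNat * k) * (∑ i ∈ range s, (X : PowerSeries ℤ)^i)^(β + α*k) := by
  have hX : (X : PowerSeries ℤ)^((-(r*k)).toNat) ≠ 0 :=
    pow_ne_zero _ PowerSeries.X_ne_zero
  apply mul_left_cancel₀ hX
  calc X^((-(r*k)).toNat) * ((1 - X : PowerSeries ℤ)^(β + α*k + 1) * Gq s α β r k)
      = (1 - X : PowerSeries ℤ)^(β + α*k + 1) * (X^((-(r*k)).toNat) * Gq s α β r k) := by ring
    _ = (1 - X : PowerSeries ℤ)^(β + α*k + 1) * (X^((r*k).toNat) * Fq s ((β:ℤ) + (α:ℤ)*k)) := by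
        rw [Gq_shift s α β r hr]
    _ = X^((r*k).toNat) * ((1 - X : PowerSeries ℤ)^(β + α*k + 1) * Fq s (β + α*k)) := by
        ring
    _ = X^((r*k).toNat) * (∑ i ∈ Icc 1 s, (X : PowerSeries ℤ)^i)^(β + α*k) := by
        rw [show ((β:ℤ) + (α:ℤ)*(k:ℕ)) = ((β + α*k : ℕ) : ℤ) from by push_cast ; ring, Fq_pow]
    _ = X^((r*k).toNat) * (X^(β + α*k) * (∑ i ∈ range s, (X : PowerSeries ℤ)^i)^(β + α*k)) := by
        rw [P_eq, mul_pow]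
    _ = X^((-(r*k)).toNat) * (X^(β + (r+α).toNat * k) * (∑ i ∈ range s, (X : PowerSeries ℤ)^i)^(β + α*k)) := by
        rw [← mul_assoc, ← mul_assoc, ← pow_add, ← pow_add]
        have ht : (((r+α).toNat : ℤ)) = r + α := Int.toNat_of_nonneg hr.le
        have htk : (((r+α).toNat : ℤ)) * k = r*k + (α:ℤ)*k := by rw [ht]; ring
        congr 2
        omega

end G

section Tel
variable (s α β : ℕ) (r : ℤ)

lemma Dq_G (hr : 0 < r + α) (k : ℕ) :
    ((1 - X : PowerSeries ℤ)^α - X^((r+α).toNat) * (∑ i ∈ range s, (X : PowerSeries ℤ)^i)^α)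
        * Gq s α β r k
      = (1 - X : PowerSeries ℤ)^α * (Gq s α β r k - Gq s α β r (k+1)) := by
  have key : X^((r+α).toNat) * (∑ i ∈ range s, (X : PowerSeries ℤ)^i)^α * Gq s α β r k
      = (1 - X : PowerSeries ℤ)^α * Gq s α β r (k+1) := by
    have hE : (1 - X : PowerSeries ℤ)^(β + α*k + 1) ≠ 0 := by
      apply pow_ne_zero
      intro h
      have := congrArg (PowerSeries.constantCoeff (R := ℤ)) h
      simp at this
    apply mul_left_cancel₀ hE
    calc (1 - X : PowerSeries ℤ)^(β + α*k + 1)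
          * (X^((r+α).toNat) * (∑ i ∈ range s, (X : PowerSeries ℤ)^i)^α * Gq s α β r k)
        = X^((r+α).toNat) * (∑ i ∈ range s, (X : PowerSeries ℤ)^i)^α
            * ((1 - X : PowerSeries ℤ)^(β + α*k + 1) * Gq s α β r k) := by ring
      _ = X^((r+α).toNat) * (∑ i ∈ range s, (X : PowerSeries ℤ)^i)^α
            * (X^(β + (r+α).toNat * k) * (∑ i ∈ range s, (X : PowerSeries ℤ)^i)^(β + α*k)) := by
          rw [Gq_eq s α β r hr]
      _ = X^(β + (r+α).toNat * (k+1)) * (∑ i ∈ range s, (X : PowerSeries ℤ)^i)^(β + α*(k+1)) := by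
          rw [mul_mul_mul_comm, ← pow_add, ← pow_add]
          congr 2 <;> ring
      _ = (1 - X : PowerSeries ℤ)^(β + α*(k+1) + 1) * Gq s α β r (k+1) := by
          rw [Gq_eq s α β r hr]
      _ = (1 - X : PowerSeries ℤ)^(β + α*k + 1) * ((1 - X : PowerSeries ℤ)^α * Gq s α β r (k+1)) := by
          rw [← mul_assoc, ← pow_add]
          congr 2
          ring
  rw [sub_mul, key]
  ring

lemma Dq_sum (hr : 0 < r + α) (N : ℕ) :
    ((1 - X : PowerSeries ℤ)^α - X^((r+α).toNat) * (∑ i ∈ range s, (X : PowerSeries ℤ)^i)^α)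
        * (∑ k ∈ range N, Gq s α β r k)
      = (1 - X : PowerSeries ℤ)^α * (Gq s α β r 0 - Gq s α β r N) := by
  rw [Finset.mul_sum]
  calc ∑ k ∈ range N,
        ((1 - X : PowerSeries ℤ)^α - X^((r+α).toNat) * (∑ i ∈ range s, (X : PowerSeries ℤ)^i)^α)
          * Gq s α β r k
      = ∑ k ∈ range N, ((1 - X : PowerSeries ℤ)^α * Gq s α β r k
          - (1 - X : PowerSeries ℤ)^α * Gq s α β r (k+1)) := by
        apply Finset.sum_congr rfl
        intro k _
        rw [Dq_G s α β r hr, mul_sub]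
    _ = (1 - X : PowerSeries ℤ)^α * Gq s α β r 0 - (1 - X : PowerSeries ℤ)^α * Gq s α β r N :=
        Finset.sum_range_sub' _ N
    _ = (1 - X : PowerSeries ℤ)^α * (Gq s α β r 0 - Gq s α β r N) := by ring

lemma Gq_coeff_zero (hr : 0 < r + α) (k n : ℕ) (h : n < k) :
    PowerSeries.coeff (R := ℤ) n (Gq s α β r k) = 0 := by
  simp only [Gq, coeff_mk, quasiZ]
  split_ifs with h1
  · rfl
  · apply quasi_eq_zero
    right
    have h2 : (1:ℤ) ≤ r + α := by omega
    have h3 : (k:ℤ) * 1 ≤ (k:ℤ) * (r + α) := by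
      apply mul_le_mul_of_nonneg_left h2 (by positivity)
    have h4 : (k:ℤ) * (r + α) = r*k + (α:ℤ)*k := by ring
    omega

end Tel

section Final
variable (s α β : ℕ) (r : ℤ)

lemma T_coeff (hr : 0 < r + α) (n : ℕ) :
    Ttr s α β r ((n:ℤ)+1) = ∑ k ∈ range (n+1), PowerSeries.coeff (R := ℤ) n (Gq s α β r k) := by
  rw [Ttr, if_neg (by omega)]
  have hsupp : (Function.support fun k : ℕ =>
      quasiZ s (((n:ℤ)+1-1) - r * k) ((β : ℤ) + (α : ℤ) * k)) ⊆ (range (n+1) : Finset ℕ) := by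
    intro k hk
    simp only [Function.mem_support] at hk
    by_contra hmem
    simp only [Finset.coe_range, Set.mem_Iio, not_lt] at hmem
    apply hk
    have := Gq_coeff_zero s α β r hr k n (by omega)
    simp only [Gq, coeff_mk] at this
    rw [show ((n:ℤ)+1-1) = (n:ℤ) from by ring]
    exact this
  rw [finsum_eq_sum_of_support_subset _ hsupp]
  apply Finset.sum_congr rfl
  intro k _
  simp only [Gq, coeff_mk]
  congr 1
  ring

lemma coeff_mul_congr (A f g : PowerSeries ℤ) (n : ℕ)
    (h : ∀ m, m ≤ n → PowerSeries.coeff (R := ℤ) m f = PowerSeries.coeff (R := ℤ) m g) :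
    PowerSeries.coeff (R := ℤ) n (A * f) = PowerSeries.coeff (R := ℤ) n (A * g) := by
  rw [PowerSeries.coeff_mul, PowerSeries.coeff_mul]
  apply Finset.sum_congr rfl
  intro p hp
  rw [Finset.HasAntidiagonal.mem_antidiagonal] at hp
  rw [h p.2 (by omega)]

/-- Generating function of the transversal sums: in `ℤ[[x]]`,
`((1-x)^α - x^{r+α} (1 + x + ⋯ + x^{s-1})^α) ⬝ ∑_{n≥0} T^{(α,β,r)}_{n+1,s} x^n
  = (1-x)^{α-β-1} (x + x² + ⋯ + x^s)^β`. -/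
theorem transversal_generating_function (s α β : ℕ) (r : ℤ) (hs : 1 ≤ s)
    (hα : 1 ≤ α) (hβ : β < α) (hr : 0 < r + α) :
    ((1 - PowerSeries.X : PowerSeries ℤ) ^ α -
        (PowerSeries.X : PowerSeries ℤ) ^ ((r + α).toNat) *
          (∑ i ∈ Finset.range s, (PowerSeries.X : PowerSeries ℤ) ^ i) ^ α) *
        PowerSeries.mk (fun n => Ttr s α β r ((n : ℤ) + 1)) =
      (1 - PowerSeries.X : PowerSeries ℤ) ^ (α - β - 1) *
        (∑ i ∈ Finset.Icc 1 s, (PowerSeries.X : PowerSeries ℤ) ^ i) ^ β := by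
  set Q : PowerSeries ℤ := ∑ i ∈ Finset.range s, (PowerSeries.X : PowerSeries ℤ) ^ i with hQ
  set D : PowerSeries ℤ := (1 - PowerSeries.X : PowerSeries ℤ) ^ α -
      (PowerSeries.X : PowerSeries ℤ) ^ ((r + α).toNat) * Q ^ α with hD
  set T : PowerSeries ℤ := PowerSeries.mk (fun n => Ttr s α β r ((n : ℤ) + 1)) with hT
  have hE : (1 - X : PowerSeries ℤ)^(β+1) ≠ 0 := by
    apply pow_ne_zero
    intro h
    have := congrArg (PowerSeries.constantCoeff (R := ℤ)) h
    simp at this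
  apply mul_left_cancel₀ hE
  have hPQ : (∑ i ∈ Finset.Icc 1 s, (PowerSeries.X : PowerSeries ℤ) ^ i) ^ β
      = X^β * Q^β := by rw [P_eq, mul_pow, hQ]
  have hRHS : (1 - X : PowerSeries ℤ)^(β+1) *
      ((1 - PowerSeries.X : PowerSeries ℤ) ^ (α - β - 1) *
        (∑ i ∈ Finset.Icc 1 s, (PowerSeries.X : PowerSeries ℤ) ^ i) ^ β)
      = (1 - X : PowerSeries ℤ)^α * (X^β * Q^β) := by
    rw [hPQ, ← mul_assoc, ← pow_add, show β + 1 + (α - β - 1) = α from by omega]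
  rw [hRHS]
  ext n
  -- replace T by the partial sum S (n+1)
  have step1 : PowerSeries.coeff (R := ℤ) n ((1 - X : PowerSeries ℤ)^(β+1) * (D * T))
      = PowerSeries.coeff (R := ℤ) n ((1 - X : PowerSeries ℤ)^(β+1) *
          (D * (∑ k ∈ range (n+1), Gq s α β r k))) := by
    rw [← mul_assoc, ← mul_assoc]
    apply coeff_mul_congr
    intro m hm
    rw [hT, coeff_mk, T_coeff s α β r hr m, map_sum]
    apply Finset.sum_subset
    · intro k hk
      simp only [mem_range] at hk ⊢
      omega
    · intro k _ hk
      simp only [mem_range, not_lt] at hk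
      exact Gq_coeff_zero s α β r hr k m (by omega)
  rw [step1, Dq_sum s α β r hr (n+1)]
  have hG0 : (1 - X : PowerSeries ℤ)^(β+1) * Gq s α β r 0 = X^β * Q^β := by
    have := Gq_eq s α β r hr 0
    simpa using this
  calc PowerSeries.coeff (R := ℤ) n ((1 - X : PowerSeries ℤ)^(β+1) *
        ((1 - X : PowerSeries ℤ)^α * (Gq s α β r 0 - Gq s α β r (n+1))))
      = PowerSeries.coeff (R := ℤ) n ((1 - X : PowerSeries ℤ)^α * ((1 - X : PowerSeries ℤ)^(β+1) * Gq s α β r 0)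
          - ((1 - X : PowerSeries ℤ)^α * (1 - X : PowerSeries ℤ)^(β+1)) * Gq s α β r (n+1)) := by
        congr 1
        ring
    _ = PowerSeries.coeff (R := ℤ) n ((1 - X : PowerSeries ℤ)^α * (X^β * Q^β))
          - PowerSeries.coeff (R := ℤ) n (((1 - X : PowerSeries ℤ)^α * (1 - X : PowerSeries ℤ)^(β+1)) * Gq s α β r (n+1)) := by
        rw [map_sub, hG0]
    _ = PowerSeries.coeff (R := ℤ) n ((1 - X : PowerSeries ℤ)^α * (X^β * Q^β)) := by
        rw [show PowerSeries.coeff (R := ℤ) n (((1 - X : PowerSeries ℤ)^α * (1 - X : PowerSeries ℤ)^(β+1)) * Gq s α β r (n+1)) = 0 from ?_, sub_zero]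
        rw [show (0:ℤ) = PowerSeries.coeff (R := ℤ) n (((1 - X : PowerSeries ℤ)^α * (1 - X : PowerSeries ℤ)^(β+1)) * 0) from by simp]
        apply coeff_mul_congr
        intro m hm
        rw [map_zero]
        exact Gq_coeff_zero s α β r hr (n+1) m (by omega)

end Final
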